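/- Let F : [a,b] → ℝ be continuously differentiable with F(a) = 0 and derivative f satisfying: f is decreasing and continuously differentiable with 0 < ε ≤ |f'(t)| ≤ M < ∞ for all t ∈ [a,b]. Let x ∈ [a,b], c > 0 small, and α_x = f(x) + c|f'(x)|. Then for all z with cz ≤ x − a and z ≥ A, where A is any constant with Aε > 2M, one has F(x − 2cz) − F(x) + 2c α_x z ≤ −ε c² z². -/

import Mathlib

open Set intervalIntegral

theorem stmt16 (a b ε M A : ℝ) (f f' : ℝ → ℝ) (hab : a < b)
    (hε : 0 < ε) (hM : ε ≤ M)
    (hderiv : ∀ t ∈ Icc a b, HasDerivAt f (f' t) t)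
    (hf'cont : ContinuousOn f' (Icc a b))
    (hf'neg : ∀ t ∈ Icc a b, f' t < 0)
    (hbounds : ∀ t ∈ Icc a b, ε ≤ |f' t| ∧ |f' t| ≤ M)
    (hA : 2 * M < A * ε) :
    ∃ c₀ > (0:ℝ), ∀ c : ℝ, 0 < c → c ≤ c₀ → ∀ x ∈ Icc a b, ∀ z : ℝ,
      A ≤ z → 2 * c * z ≤ x - a →
      (∫ s in a..(x - 2 * c * z), f s) - (∫ s in a..x, f s)
          + 2 * c * (f x + c * |f' x|) * z
        ≤ -(ε * c ^ 2 * z ^ 2) := by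
  have hcont : ContinuousOn f (Icc a b) :=
    fun t ht => (hderiv t ht).continuousAt.continuousWithinAt
  refine ⟨1, one_pos, fun c hc hc1 x hx z hzA hzx => ?_⟩
  have hA0 : 0 < A := by nlinarith
  have hz0 : 0 < z := lt_of_lt_of_le hA0 hzA
  set y := x - 2 * c * z with hy
  have hyx : y < x := by
    have : 0 < 2 * c * z := by positivity
    simp [hy]; linarith
  have hya : a ≤ y := by simp [hy]; linarith
  have hxb : x ≤ b := hx.2
  have hsub : Icc y x ⊆ Icc a b := Icc_subset_Icc hya hxb
  -- pointwise bound
  have hpt : ∀ s ∈ Icc y x, f x + ε * (x - s) ≤ f s := by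
    intro s hs
    have hsab : Icc s x ⊆ Icc a b := Icc_subset_Icc (hsub hs).1 hxb
    have hftc : ∫ t in s..x, f' t = f x - f s := by
      apply integral_eq_sub_of_hasDerivAt
      · intro t ht
        exact hderiv t (hsab (by rwa [uIcc_of_le hs.2] at ht))
      · exact (hf'cont.mono (by rwa [uIcc_of_le hs.2])).intervalIntegrable
    have hmono : ∫ t in s..x, f' t ≤ ∫ t in s..x, (-ε : ℝ) := by
      apply integral_mono_on hs.2
        (hf'cont.mono (by rwa [uIcc_of_le hs.2])).intervalIntegrable
        intervalIntegrable_const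
      intro t ht
      have h1 := (hbounds t (hsab ht)).1
      have h2 := hf'neg t (hsab ht)
      rw [abs_of_neg h2] at h1
      linarith
    rw [hftc] at hmono
    simp at hmono
    nlinarith
  -- integrability
  have hint_yx : IntervalIntegrable f MeasureTheory.volume y x :=
    (hcont.mono (by rwa [uIcc_of_le hyx.le])).intervalIntegrable
  have hint_ay : IntervalIntegrable f MeasureTheory.volume a y :=
    (hcont.mono (by rw [uIcc_of_le hya]; exact Icc_subset_Icc le_rfl (hyx.le.trans hxb))).intervalIntegrable
  have hint_ax : IntervalIntegrable f MeasureTheory.volume a x :=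
    (hcont.mono (by rw [uIcc_of_le (hya.trans hyx.le)]; exact Icc_subset_Icc le_rfl hxb)).intervalIntegrable
  -- integral of lower bound
  have hlin : (∫ s in y..x, (f x + ε * (x - s))) =
      f x * (x - y) + ε * (x - y) ^ 2 / 2 := by
    have : ∀ s ∈ uIcc y x, HasDerivAt (fun s => f x * s - ε * (x - s) ^ 2 / 2)
        (f x + ε * (x - s)) s := by
      intro s _
      have h1 : HasDerivAt (fun s : ℝ => f x * s) (f x) s := by
        simpa using (hasDerivAt_id s).const_mul (f x)
      have h2 : HasDerivAt (fun s : ℝ => ε * (x - s) ^ 2 / 2) (-(ε * (x - s))) s := by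
        have : HasDerivAt (fun s : ℝ => (x - s) ^ 2) (2 * (x - s) * (-1)) s :=
          ((hasDerivAt_id s).const_sub x).pow 2 |>.congr_deriv (by simp)
        have := (this.const_mul ε).div_const 2
        rw [show -(ε * (x - s)) = ε * (2 * (x - s) * -1) / 2 by ring]; exact this
      simpa using h1.fun_sub h2
    rw [integral_eq_sub_of_hasDerivAt this
      (by apply Continuous.intervalIntegrable; fun_prop)]
    ring
  have hge : f x * (x - y) + ε * (x - y) ^ 2 / 2 ≤ ∫ s in y..x, f s := by
    rw [← hlin]
    apply integral_mono_on hyx.le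
      (show IntervalIntegrable (fun s => f x + ε * (x - s)) MeasureTheory.volume y x by
        apply Continuous.intervalIntegrable; fun_prop) hint_yx hpt
  have hsplit : (∫ s in a..y, f s) - (∫ s in a..x, f s) = -∫ s in y..x, f s := by
    have h := integral_add_adjacent_intervals hint_ay hint_yx
    linarith
  rw [hsplit]
  have hM' := (hbounds x hx).2
  have hxy : x - y = 2 * c * z := by simp [hy]
  have habs : 0 ≤ |f' x| := abs_nonneg _
  rw [hxy] at hge
  have h1 : |f' x| * (c ^ 2 * z) ≤ M * (c ^ 2 * z) :=
    mul_le_mul_of_nonneg_right hM' (by positivity)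
  have h2 : (2 * M) * (c ^ 2 * z) ≤ (A * ε) * (c ^ 2 * z) :=
    mul_le_mul_of_nonneg_right hA.le (by positivity)
  have h3 : A * (ε * c ^ 2 * z) ≤ z * (ε * c ^ 2 * z) :=
    mul_le_mul_of_nonneg_right hzA (by positivity)
  nlinarith [hge, h1, h2, h3]
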